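/- Balancing property of optimal fractional decompositions: for every α ∈ ℳ₁(𝕋) there exist α₁, α₂, α₃ ∈ ℳ_b(𝕋) with α₁+α₂+α₃ = α and Φ(α) = φ(α₁,α₂,α₃); moreover, whenever α₁, α₂, α₃ ∈ ℳ_b(𝕋) satisfy α₁+α₂+α₃ = α and Φ(α) = φ(α₁,α₂,α₃), one has α₁(c₁) = α₂(c₂) = α₃(c₃). -/

import Mathlib

open MeasureTheory Filter Asymptotics
open scoped ENNReal NNReal

noncomputable section

namespace LoadOpt

/-- `j = e^{2iπ/3}`, primitive cube root of unity. -/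
def jc : ℂ := Complex.exp (2 * Real.pi * Complex.I / 3)

/-- `λ = 2 (3√3)^{-1/2}`. -/
def lam : ℝ := 2 / Real.sqrt (3 * Real.sqrt 3)

/-- The bins `B₁, B₂, B₃` (indexed by `0, 1, 2`). -/
def Bin : Fin 3 → ℂ := ![jc ^ 2 * (lam * Complex.I), (lam : ℂ) * Complex.I, jc * (lam * Complex.I)]

/-- The triangle `𝕋`, convex hull of the three bins. -/
def Tri : Set ℂ := convexHull ℝ {Bin 0, Bin 1, Bin 2}

/-- Cost functions `c₁, c₂, c₃` (indexed by `0, 1, 2`). -/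
def costs (c : ℂ → ℝ) : Fin 3 → ℂ → ℝ := ![c, fun x => c (jc ^ 2 * x), fun x => c (jc * x)]

/-- Half-lines removed to make the Voronoi cells a partition: `D₁ = {ijt : t < 0}`,
`D_l = {ij^l t : t ≤ 0}` for `l = 2, 3`. -/
def Dl : Fin 3 → Set ℂ :=
  ![{z | ∃ t : ℝ, t < 0 ∧ z = Complex.I * jc * t},
    {z | ∃ t : ℝ, t ≤ 0 ∧ z = Complex.I * jc ^ 2 * t},
    {z | ∃ t : ℝ, t ≤ 0 ∧ z = Complex.I * jc ^ 3 * t}]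

/-- The Voronoi cells `𝕋₁, 𝕋₂, 𝕋₃` (indexed by `0, 1, 2`). -/
def cell (l : Fin 3) : Set ℂ :=
  {x ∈ Tri | dist x (Bin l) = ⨅ m : Fin 3, dist x (Bin m)} \ Dl l

/-- The load `ρₙ(A)` of the allocation `A` of the points `x 0, …, x (n-1)`. -/
def load (c : ℂ → ℝ) {n : ℕ} (x : Fin n → ℂ) (A : Fin n → Fin 3) : ℝ :=
  Finset.univ.sup' Finset.univ_nonempty fun l => ∑ k, if A k = l then costs c l (x k) else 0

/-- The optimal load `ρₙ`. -/
def optLoad (c : ℂ → ℝ) {n : ℕ} (x : Fin n → ℂ) : ℝ :=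
  Finset.univ.inf' Finset.univ_nonempty fun A : Fin n → Fin 3 => load c x A

/-- The suboptimal load `ρ̄ₙ`, allocating each point to the bin of its Voronoi cell. -/
def subLoad (c : ℂ → ℝ) {n : ℕ} (x : Fin n → ℂ) : ℝ :=
  Finset.univ.sup' Finset.univ_nonempty fun l => ∑ k, (cell l).indicator (costs c l) (x k)

/-- `γ = ∫_{𝕋₁} c`. -/
def gamma (c : ℂ → ℝ) : ℝ := ∫ x in cell 0, c x

/-- Assumption (C1). -/
def C1 (c : ℂ → ℝ) : Prop :=
  ∀ x ∈ Tri, ∀ l : Fin 3, l ≠ 0 → dist x (Bin 0) < dist x (Bin l) → costs c 0 x < costs c l x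

/-- Assumption (C2): symmetry of `c` w.r.t. the line through `0` and `B₁`, plus a Lipschitz
property near `D₁ ∪ D₃`. -/
def C2 (c : ℂ → ℝ) : Prop :=
  (∀ θ ∈ Set.Icc (0 : ℝ) (2 * Real.pi), ∀ t : ℝ, 0 < t →
      (t : ℂ) * Complex.exp ((θ : ℂ) * Complex.I) ∈ Tri →
      c ((t : ℂ) * Complex.exp ((θ : ℂ) * Complex.I))
        = c ((t : ℂ) * Complex.exp (((-θ - Real.pi / 3 : ℝ) : ℂ) * Complex.I))) ∧
  ∃ (K : NNReal) (U : Set ℂ), IsOpen U ∧ Dl 0 ∪ Dl 2 ⊆ U ∧ LipschitzOnWith K c U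

/-- `φ(β₀,β₁,β₂) = max (β₀(c₁), β₁(c₂), β₂(c₃))`. -/
def phiVal (c : ℂ → ℝ) (β : Fin 3 → Measure ℂ) : ℝ :=
  max (max (∫ x, costs c 0 x ∂(β 0)) (∫ x, costs c 1 x ∂(β 1))) (∫ x, costs c 2 x ∂(β 2))

/-- Decompositions of `α` into three measures on `𝕋` of mass at most one. -/
def decomps (α : Measure ℂ) : Set (Fin 3 → Measure ℂ) :=
  {β | (∀ l, β l Set.univ ≤ 1) ∧ (∀ l, β l Triᶜ = 0) ∧ β 0 + β 1 + β 2 = α}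

/-- `Φ(α) = inf {φ(β₀,β₁,β₂) : β₀ + β₁ + β₂ = α}`. -/
def Phi (c : ℂ → ℝ) (α : Measure ℂ) : ℝ := sInf (phiVal c '' decomps α)

/-- `Ψ(α) = φ(α|_{𝕋₁}, α|_{𝕋₂}, α|_{𝕋₃})`. -/
def Psi (c : ℂ → ℝ) (α : Measure ℂ) : ℝ :=
  max (max (∫ x in cell 0, costs c 0 x ∂α) (∫ x in cell 1, costs c 1 x ∂α))
    (∫ x in cell 2, costs c 2 x ∂α)

/-- The relative entropy `H(α | ν)`, equal to `∫ (dα/dν) log (dα/dν) dν` if `α ≪ ν` (with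
value `+∞` if the integral does not exist) and `+∞` otherwise. -/
def relEntropy (α ν : Measure ℂ) : EReal :=
  open scoped Classical in
  if α ≪ ν ∧ Integrable (llr α ν) α then ((∫ x, llr α ν x ∂α : ℝ) : EReal) else ⊤
lemma jc_pow_three : jc ^ 3 = 1 := by
  rw [jc, ← Complex.exp_nat_mul]
  rw [show (3 : ℕ) * (2 * Real.pi * Complex.I / 3) = 2 * Real.pi * Complex.I by push_cast; ring]
  exact Complex.exp_two_pi_mul_I

lemma jc_mul_mem_Tri {x : ℂ} (hx : x ∈ Tri) : jc * x ∈ Tri := by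
  have h : (LinearMap.mulLeft ℝ jc) '' {Bin 0, Bin 1, Bin 2} ⊆ {Bin 0, Bin 1, Bin 2} := by
    intro y hy
    simp only [Set.image_insert_eq, Set.image_singleton, LinearMap.mulLeft_apply] at hy
    have h0 : jc * Bin 0 = Bin 1 := by
      simp [Bin, ← mul_assoc, ← pow_succ', jc_pow_three]
    have h1 : jc * Bin 1 = Bin 2 := by simp [Bin]
    have h2 : jc * Bin 2 = Bin 0 := by
      simp [Bin, ← mul_assoc, ← sq]
    rw [h0, h1, h2] at hy
    rcases hy with h | h | h <;> simp_all
  have := (LinearMap.mulLeft ℝ jc).image_convexHull ({Bin 0, Bin 1, Bin 2} : Set ℂ)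
  have hmem : jc * x ∈ convexHull ℝ ((LinearMap.mulLeft ℝ jc) '' {Bin 0, Bin 1, Bin 2}) := by
    rw [← this]; exact ⟨x, hx, rfl⟩
  exact convexHull_mono h hmem

lemma jc_sq_mul_mem_Tri {x : ℂ} (hx : x ∈ Tri) : jc ^ 2 * x ∈ Tri := by
  have := jc_mul_mem_Tri (jc_mul_mem_Tri hx)
  rwa [← mul_assoc, ← sq] at this

lemma measurableSet_Tri : MeasurableSet Tri :=
  ((Set.toFinite _).isCompact_convexHull ℝ).isClosed.measurableSet

lemma costs_measurable {c : ℂ → ℝ} (hc : Measurable c) (l : Fin 3) :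
    Measurable (costs c l) := by
  fin_cases l <;> simp only [costs, Matrix.cons_val_zero, Matrix.cons_val_one, Matrix.head_cons,
    Matrix.cons_val_two, Matrix.tail_cons]
  · exact hc
  · exact hc.comp (measurable_const_mul _)
  · exact hc.comp (measurable_const_mul _)

lemma costs_nonneg {c : ℂ → ℝ} (hc : ∀ x, 0 ≤ c x) (l : Fin 3) (x : ℂ) :
    0 ≤ costs c l x := by
  fin_cases l <;> simp [costs, hc]

lemma exists_costs_bound {c : ℂ → ℝ} (hc_bdd : BddAbove (c '' Tri)) :
    ∃ B : ℝ, 0 ≤ B ∧ ∀ l : Fin 3, ∀ x ∈ Tri, costs c l x ≤ B := by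
  obtain ⟨u, hu⟩ := hc_bdd
  refine ⟨max u 0, le_max_right _ _, fun l x hx => ?_⟩
  have key : ∀ y ∈ Tri, c y ≤ max u 0 :=
    fun y hy => le_trans (hu (Set.mem_image_of_mem c hy)) (le_max_left _ _)
  fin_cases l
  · exact key x hx
  · exact key _ (jc_sq_mul_mem_Tri hx)
  · exact key _ (jc_mul_mem_Tri hx)



lemma decomps_le {α : Measure ℂ} {β : Fin 3 → Measure ℂ} (hβ : β ∈ decomps α) (l : Fin 3) :
    β l ≤ α := by
  rw [← hβ.2.2, Measure.le_iff']
  intro s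
  simp only [Measure.coe_add, Pi.add_apply]
  fin_cases l
  · exact le_add_right (le_add_right le_rfl)
  · exact le_add_right (le_add_left le_rfl)
  · exact le_add_left le_rfl

lemma ae_mem_Tri {μ : Measure ℂ} (hμT : μ Triᶜ = 0) : ∀ᵐ x ∂μ, x ∈ Tri := by
  rw [MeasureTheory.ae_iff]
  exact hμT

lemma integrable_costs {c : ℂ → ℝ} (hc_meas : Measurable c) (hc_nonneg : ∀ x, 0 ≤ c x)
    (hc_bdd : BddAbove (c '' Tri)) {μ : Measure ℂ} [IsFiniteMeasure μ] (hμT : μ Triᶜ = 0)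
    (l : Fin 3) : Integrable (costs c l) μ := by
  obtain ⟨B, hB0, hB⟩ := exists_costs_bound hc_bdd
  refine Integrable.mono' (integrable_const B)
    ((costs_measurable hc_meas l).aestronglyMeasurable) ?_
  filter_upwards [ae_mem_Tri hμT] with x hx
  rw [Real.norm_eq_abs, abs_of_nonneg (costs_nonneg hc_nonneg l x)]
  exact hB l x hx

lemma integral_le_phiVal {c : ℂ → ℝ} (β : Fin 3 → Measure ℂ) (l : Fin 3) :
    (∫ x, costs c l x ∂(β l)) ≤ phiVal c β := by
  fin_cases l
  · exact le_trans (le_max_left _ _) (le_max_left _ _)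
  · exact le_trans (le_max_right _ _) (le_max_left _ _)
  · exact le_max_right _ _

lemma phiVal_nonneg {c : ℂ → ℝ} (hc_nonneg : ∀ x, 0 ≤ c x) (β : Fin 3 → Measure ℂ) :
    0 ≤ phiVal c β :=
  le_trans (integral_nonneg fun x => costs_nonneg hc_nonneg 2 x)
    (le_max_right _ _)

lemma integrable_coeFn_of_le {α μ : Measure ℂ} [IsProbabilityMeasure α] (hμ : μ ≤ α)
    (f : Lp ℝ 2 α) : Integrable f μ :=
  ((Lp.memLp f).integrable one_le_two).mono_measure hμ

lemma integral_norm_le_norm {α : Measure ℂ} [IsProbabilityMeasure α] (f : Lp ℝ 2 α) :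
    ∫ x, ‖f x‖ ∂α ≤ ‖f‖ := by
  rw [Lp.norm_def, integral_norm_eq_lintegral_enorm (Lp.aestronglyMeasurable f),
    ← eLpNorm_one_eq_lintegral_enorm]
  exact ENNReal.toReal_mono (Lp.eLpNorm_ne_top f)
    (eLpNorm_le_eLpNorm_of_exponent_le one_le_two (Lp.aestronglyMeasurable f))

def intCLM (α μ : Measure ℂ) [IsProbabilityMeasure α] (hμ : μ ≤ α) : Lp ℝ 2 α →L[ℝ] ℝ :=
  LinearMap.mkContinuous
    { toFun := fun f => ∫ x, f x ∂μ
      map_add' := fun f g => by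
        show ∫ x, (f + g : Lp ℝ 2 α) x ∂μ = ∫ x, f x ∂μ + ∫ x, g x ∂μ
        rw [integral_congr_ae ((Measure.absolutelyContinuous_of_le hμ).ae_eq (Lp.coeFn_add f g))]
        exact integral_add (integrable_coeFn_of_le hμ f) (integrable_coeFn_of_le hμ g)
      map_smul' := fun r f => by
        show ∫ x, (r • f : Lp ℝ 2 α) x ∂μ = r • ∫ x, f x ∂μ
        rw [integral_congr_ae ((Measure.absolutelyContinuous_of_le hμ).ae_eq (Lp.coeFn_smul r f))]
        simpa using integral_smul r (fun x => (f : ℂ → ℝ) x) }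
    1 (fun f => by
      simp only [LinearMap.coe_mk, AddHom.coe_mk, one_mul]
      have h1 : ‖∫ x, f x ∂μ‖ ≤ ∫ x, ‖f x‖ ∂μ := norm_integral_le_integral_norm _
      have h2 : ∫ x, ‖f x‖ ∂μ ≤ ∫ x, ‖f x‖ ∂α :=
        integral_mono_measure hμ (Filter.Eventually.of_forall fun x => norm_nonneg _)
          ((Lp.memLp f).integrable one_le_two).norm
      have h3 : ∫ x, ‖f x‖ ∂α ≤ ‖f‖ := integral_norm_le_norm f
      exact le_trans h1 (le_trans h2 h3))

lemma intCLM_apply {α μ : Measure ℂ} [IsProbabilityMeasure α] (hμ : μ ≤ α) (f : Lp ℝ 2 α) :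
    intCLM α μ hμ f = ∫ x, f x ∂μ := rfl

lemma intCLM_nonneg {α μ : Measure ℂ} [IsProbabilityMeasure α] (hμ : μ ≤ α) {f : Lp ℝ 2 α}
    (hf : 0 ≤ f) : 0 ≤ intCLM α μ hμ f :=
  integral_nonneg_of_ae (Filter.Eventually.filter_mono
    (Measure.absolutelyContinuous_of_le hμ).ae_le ((Lp.coeFn_nonneg f).mpr hf))


set_option maxHeartbeats 2000000 in
lemma exists_optimal_decomp (c : ℂ → ℝ) (hc_meas : Measurable c) (hc_nonneg : ∀ x, 0 ≤ c x)
    (hc_bdd : BddAbove (c '' Tri)) (α : Measure ℂ) (hα : IsProbabilityMeasure α)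
    (hαT : α Triᶜ = 0) :
    ∃ β ∈ decomps α, ∀ β' ∈ decomps α, phiVal c β ≤ phiVal c β' := by
  haveI := hα
  obtain ⟨B, hB0, hB⟩ := exists_costs_bound hc_bdd
  have hg_mem : ∀ l : Fin 3, MemLp (costs c l) 2 α := fun l =>
    MemLp.of_bound ((costs_measurable hc_meas l).aestronglyMeasurable) B <| by
      filter_upwards [ae_mem_Tri hαT] with x hx
      rw [Real.norm_eq_abs, abs_of_nonneg (costs_nonneg hc_nonneg l x)]
      exact hB l x hx
  set ghat : Fin 3 → Lp ℝ 2 α := fun l => (hg_mem l).toLp _ with hghat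
  -- the constraint set
  set K : Set (Fin 3 → WeakDual ℝ (Lp ℝ 2 α)) :=
    {Λ | (∀ l, ∀ f : Lp ℝ 2 α, 0 ≤ f → 0 ≤ Λ l f) ∧
      ∀ f : Lp ℝ 2 α, Λ 0 f + Λ 1 f + Λ 2 f = ∫ x, f x ∂α} with hK
  -- decompositions give elements of K
  set mkΛ : (β : Fin 3 → Measure ℂ) → (∀ l : Fin 3, β l ≤ α) → (Fin 3 → WeakDual ℝ (Lp ℝ 2 α)) :=
    fun β hle l => StrongDual.toWeakDual (intCLM α (β l) (hle l)) with hmkΛ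
  have hmkΛ_apply : ∀ β hle (l : Fin 3) (f : Lp ℝ 2 α), mkΛ β hle l f = ∫ x, f x ∂(β l) :=
    fun β hle l f => rfl
  have hmkK : ∀ β (hβ : β ∈ decomps α), mkΛ β (decomps_le hβ) ∈ K := by
    intro β hβ
    constructor
    · intro l f hf
      exact intCLM_nonneg (decomps_le hβ l) hf
    · intro f
      simp only [hmkΛ_apply]
      rw [← integral_add_measure (integrable_coeFn_of_le (decomps_le hβ 0) f)
          (integrable_coeFn_of_le (decomps_le hβ 1) f),
        ← integral_add_measure
          ((integrable_coeFn_of_le (decomps_le hβ 0) f).add_measure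
            (integrable_coeFn_of_le (decomps_le hβ 1) f))
          (integrable_coeFn_of_le (decomps_le hβ 2) f),
        hβ.2.2]
  -- K is compact
  set C : Set (WeakDual ℝ (Lp ℝ 2 α)) :=
    WeakDual.toStrongDual ⁻¹' Metric.closedBall (0 : StrongDual ℝ (Lp ℝ 2 α)) 1 with hC
  have hKsub : K ⊆ Set.pi Set.univ (fun _ : Fin 3 => C) := by
    intro Λ hΛ l _
    simp only [hC, Set.mem_preimage, Metric.mem_closedBall, dist_zero_right]
    refine ContinuousLinearMap.opNorm_le_bound _ zero_le_one fun f => ?_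
    have hdom : ∀ g : Lp ℝ 2 α, 0 ≤ g → Λ l g ≤ ∫ x, g x ∂α := by
      intro g hg
      rw [← hΛ.2 g]
      have h0 := hΛ.1 0 g hg
      have h1 := hΛ.1 1 g hg
      have h2 := hΛ.1 2 g hg
      have hor : Λ l g = Λ 0 g ∨ Λ l g = Λ 1 g ∨ Λ l g = Λ 2 g := by
        fin_cases l
        · exact Or.inl rfl
        · exact Or.inr (Or.inl rfl)
        · exact Or.inr (Or.inr rfl)
      rcases hor with h | h | h <;> rw [h] <;> linarith
    have habs : |Λ l f| ≤ Λ l |f| := by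
      have h1 : 0 ≤ Λ l (|f| - f) := hΛ.1 l _ (sub_nonneg.mpr (le_abs_self f))
      have h2 : 0 ≤ Λ l (|f| + f) := hΛ.1 l _ (by
        have h : -f ≤ |f| := (abs_neg f) ▸ le_abs_self (-f)
        rw [← sub_neg_eq_add]
        exact sub_nonneg.mpr h)
      rw [map_sub] at h1
      rw [map_add] at h2
      rw [abs_le]; constructor <;> linarith
    have habs0 : (0 : Lp ℝ 2 α) ≤ |f| := abs_nonneg f
    have hint : Λ l |f| ≤ ∫ x, (|f| : Lp ℝ 2 α) x ∂α := hdom _ habs0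
    have hnorm : ∫ x, (|f| : Lp ℝ 2 α) x ∂α ≤ ‖f‖ := by
      calc ∫ x, (|f| : Lp ℝ 2 α) x ∂α = ∫ x, ‖f x‖ ∂α := by
            refine integral_congr_ae ?_
            filter_upwards [Lp.coeFn_abs f] with x hx
            rw [hx, Real.norm_eq_abs]
        _ ≤ ‖f‖ := integral_norm_le_norm f
    rw [Real.norm_eq_abs, one_mul]
    exact le_trans habs (le_trans hint hnorm)
  have hKclosed : IsClosed K := by
    have e : K = (⋂ l : Fin 3, ⋂ f : Lp ℝ 2 α, ⋂ _ : 0 ≤ f,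
        {Λ : Fin 3 → WeakDual ℝ (Lp ℝ 2 α) | 0 ≤ Λ l f}) ∩
        ⋂ f : Lp ℝ 2 α,
          {Λ : Fin 3 → WeakDual ℝ (Lp ℝ 2 α) | Λ 0 f + Λ 1 f + Λ 2 f = ∫ x, f x ∂α} := by
      ext Λ
      simp only [hK, Set.mem_setOf_eq, Set.mem_inter_iff, Set.mem_iInter]
    rw [e]
    refine IsClosed.inter
      (isClosed_iInter fun l => isClosed_iInter fun f => isClosed_iInter fun _ => ?_)
      (isClosed_iInter fun f => ?_)
    · exact isClosed_le continuous_const ((WeakDual.eval_continuous f).comp (continuous_apply l))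
    · exact isClosed_eq
        ((((WeakDual.eval_continuous f).comp (continuous_apply 0)).add
          ((WeakDual.eval_continuous f).comp (continuous_apply 1))).add
          ((WeakDual.eval_continuous f).comp (continuous_apply 2))) continuous_const
  have hKcompact : IsCompact K :=
    IsCompact.of_isClosed_subset
      (isCompact_univ_pi fun _ : Fin 3 => WeakDual.isCompact_closedBall (𝕜 := ℝ) (E := Lp ℝ 2 α) 0 1) hKclosed hKsub
  -- K is nonempty
  have hβzero : (![α, 0, 0] : Fin 3 → Measure ℂ) ∈ decomps α := by
    refine ⟨?_, ?_, ?_⟩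
    · intro l; fin_cases l <;> simp [measure_univ]
    · intro l; fin_cases l <;> simp [hαT]
    · simp
  -- the objective
  set G : (Fin 3 → WeakDual ℝ (Lp ℝ 2 α)) → ℝ :=
    fun Λ => max (max (Λ 0 (ghat 0)) (Λ 1 (ghat 1))) (Λ 2 (ghat 2)) with hG
  have hGcont : Continuous G := by
    refine Continuous.max (Continuous.max ?_ ?_) ?_ <;>
      exact (WeakDual.eval_continuous _).comp (continuous_apply _)
  obtain ⟨Λs, hΛsK, hmin⟩ := hKcompact.exists_isMinOn
    ⟨mkΛ _ (decomps_le hβzero), hmkK _ hβzero⟩ hGcont.continuousOn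
  -- Riesz representation of the optimal point
  set D : Fin 3 → Lp ℝ 2 α := fun l =>
    (InnerProductSpace.toDual ℝ (Lp ℝ 2 α)).symm (WeakDual.toStrongDual (Λs l)) with hDdef
  have hinner : ∀ (g f : Lp ℝ 2 α), (inner ℝ g f : ℝ) = ∫ x, g x * f x ∂α := by
    intro g f
    rw [L2.inner_def]
    simp [RCLike.inner_apply, mul_comm]
  have hD : ∀ (l : Fin 3) (f : Lp ℝ 2 α), ∫ x, D l x * f x ∂α = Λs l f := by
    intro l f
    rw [← hinner]
    exact InnerProductSpace.toDual_symm_apply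
  have hDmeas : ∀ l : Fin 3, AEMeasurable (fun x => (D l x).toNNReal) α := fun l =>
    measurable_real_toNNReal.comp_aemeasurable (Lp.aestronglyMeasurable (D l)).aemeasurable
  -- positivity of densities
  have hDpos : ∀ l : Fin 3, 0 ≤ᵐ[α] ⇑(D l) := by
    intro l
    refine ae_nonneg_of_forall_setIntegral_nonneg ((Lp.memLp (D l)).integrable one_le_two) ?_
    intro s hs hsfin
    set fs : Lp ℝ 2 α := indicatorConstLp 2 hs hsfin.ne (1 : ℝ) with hfsdef
    have hfs_coe : ⇑fs =ᵐ[α] s.indicator fun _ => (1:ℝ) := indicatorConstLp_coeFn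
    have hfs_nonneg : 0 ≤ fs := by
      rw [← Lp.coeFn_nonneg]
      filter_upwards [hfs_coe] with x hx
      rw [hx]
      exact Set.indicator_apply_nonneg fun _ => zero_le_one
    have hpos : 0 ≤ Λs l fs := hΛsK.1 l fs hfs_nonneg
    rw [← hD l fs] at hpos
    have heq : ∫ x, D l x * fs x ∂α = ∫ x in s, D l x ∂α := by
      rw [← integral_indicator hs]
      refine integral_congr_ae ?_
      filter_upwards [hfs_coe] with x hx
      rw [hx]
      by_cases hxs : x ∈ s <;> simp [hxs]
    rw [heq] at hpos
    exact hpos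
  -- sum of densities is 1
  have hone_coe : ⇑((memLp_const (1:ℝ)).toLp (fun _ => (1:ℝ)) : Lp ℝ 2 α)
      =ᵐ[α] fun _ => (1:ℝ) := MemLp.coeFn_toLp _
  set one2 : Lp ℝ 2 α := (memLp_const (1:ℝ)).toLp _ with hone2
  have hone_inner : ∀ f : Lp ℝ 2 α, (inner ℝ one2 f : ℝ) = ∫ x, f x ∂α := by
    intro f
    rw [hinner]
    refine integral_congr_ae ?_
    filter_upwards [hone_coe] with x hx
    rw [hx, one_mul]
  have hsum_eq : D 0 + D 1 + D 2 = one2 := by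
    have key : ∀ f : Lp ℝ 2 α, (inner ℝ (D 0 + D 1 + D 2 - one2) f : ℝ) = 0 := by
      intro f
      rw [inner_sub_left, inner_add_left, inner_add_left]
      have h0 : (inner ℝ (D 0) f : ℝ) = Λs 0 f := InnerProductSpace.toDual_symm_apply
      have h1 : (inner ℝ (D 1) f : ℝ) = Λs 1 f := InnerProductSpace.toDual_symm_apply
      have h2 : (inner ℝ (D 2) f : ℝ) = Λs 2 f := InnerProductSpace.toDual_symm_apply
      rw [h0, h1, h2, hone_inner, hΛsK.2 f]
      ring
    have hkey := key (D 0 + D 1 + D 2 - one2)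
    rw [inner_self_eq_zero] at hkey
    exact sub_eq_zero.mp hkey
  have hsum_ae : ∀ᵐ x ∂α, D 0 x + D 1 x + D 2 x = 1 := by
    have h1 : ⇑(D 0 + D 1 + D 2) =ᵐ[α] ⇑(D 0) + ⇑(D 1) + ⇑(D 2) := by
      filter_upwards [Lp.coeFn_add (D 0 + D 1) (D 2), Lp.coeFn_add (D 0) (D 1)] with x hx1 hx2
      simp only [Pi.add_apply] at hx1 hx2 ⊢
      rw [hx1, hx2]
    have h2 : ⇑(D 0 + D 1 + D 2) =ᵐ[α] fun _ => (1:ℝ) := by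
      rw [hsum_eq]
      exact hone_coe
    filter_upwards [h1, h2] with x hx1 hx2
    have := hx1.symm.trans hx2
    simpa using this
  have hDle1 : ∀ l : Fin 3, ∀ᵐ x ∂α, D l x ≤ 1 := by
    intro l
    filter_upwards [hsum_ae, hDpos 0, hDpos 1, hDpos 2] with x h h0 h1 h2
    simp only [Pi.zero_apply] at h0 h1 h2
    have hl : D l x = D 0 x ∨ D l x = D 1 x ∨ D l x = D 2 x := by
      fin_cases l
      · exact Or.inl rfl
      · exact Or.inr (Or.inl rfl)
      · exact Or.inr (Or.inr rfl)
    rcases hl with he | he | he <;> rw [he] <;> linarith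
  -- the candidate measures
  set βs : Fin 3 → Measure ℂ :=
    fun l => α.withDensity fun x => ((D l x).toNNReal : ℝ≥0∞) with hβsdef
  have hβs_apply : ∀ (l : Fin 3) (s : Set ℂ), MeasurableSet s →
      βs l s = ∫⁻ x in s, ((D l x).toNNReal : ℝ≥0∞) ∂α := by
    intro l s hs
    rw [hβsdef]
    exact withDensity_apply _ hs
  have hβs_decomp : βs ∈ decomps α := by
    refine ⟨?_, ?_, ?_⟩
    · intro l
      rw [hβs_apply l Set.univ MeasurableSet.univ, Measure.restrict_univ]
      calc ∫⁻ x, ((D l x).toNNReal : ℝ≥0∞) ∂α ≤ ∫⁻ _, 1 ∂α := by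
            refine lintegral_mono_ae ?_
            filter_upwards [hDle1 l] with x hx
            calc ((D l x).toNNReal : ℝ≥0∞) = ENNReal.ofReal (D l x) := rfl
              _ ≤ ENNReal.ofReal 1 := ENNReal.ofReal_le_ofReal hx
              _ = 1 := ENNReal.ofReal_one
        _ = 1 := by rw [lintegral_one, measure_univ]
    · intro l
      exact withDensity_absolutelyContinuous α _ hαT
    · refine Measure.ext fun s hs => ?_
      simp only [Measure.coe_add, Pi.add_apply]
      rw [hβs_apply 0 s hs, hβs_apply 1 s hs, hβs_apply 2 s hs,
        ← lintegral_add_left' ((hDmeas 0).coe_nnreal_ennreal.restrict),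
        ← lintegral_add_left' (f := fun x => ((D 0 x).toNNReal : ℝ≥0∞) + ((D 1 x).toNNReal : ℝ≥0∞))
          (((hDmeas 0).coe_nnreal_ennreal.restrict).add
          ((hDmeas 1).coe_nnreal_ennreal.restrict))]
      have hae : ∀ᵐ x ∂(α.restrict s),
          ((D 0 x).toNNReal : ℝ≥0∞) + ((D 1 x).toNNReal : ℝ≥0∞)
            + ((D 2 x).toNNReal : ℝ≥0∞) = 1 := by
        refine ae_restrict_of_ae ?_
        filter_upwards [hsum_ae, hDpos 0, hDpos 1, hDpos 2] with x h h0 h1 h2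
        simp only [Pi.zero_apply] at h0 h1 h2
        have e0 : ((D 0 x).toNNReal : ℝ≥0∞) = ENNReal.ofReal (D 0 x) := rfl
        have e1 : ((D 1 x).toNNReal : ℝ≥0∞) = ENNReal.ofReal (D 1 x) := rfl
        have e2 : ((D 2 x).toNNReal : ℝ≥0∞) = ENNReal.ofReal (D 2 x) := rfl
        rw [e0, e1, e2, ← ENNReal.ofReal_add h0 h1, ← ENNReal.ofReal_add (by linarith) h2, h,
          ENNReal.ofReal_one]
      rw [lintegral_congr_ae hae, setLIntegral_one]
  -- the values of the candidate
  have hval : ∀ l : Fin 3, ∫ x, costs c l x ∂(βs l) = Λs l (ghat l) := by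
    intro l
    rw [hβsdef]
    simp only []
    rw [integral_withDensity_eq_integral_smul₀ (hDmeas l) (costs c l)]
    have hcongr : (fun x => (D l x).toNNReal • costs c l x) =ᵐ[α]
        fun x => D l x * (ghat l) x := by
      filter_upwards [hDpos l, MemLp.coeFn_toLp (hg_mem l)] with x hx hgx
      simp only [Pi.zero_apply] at hx
      rw [NNReal.smul_def, Real.coe_toNNReal _ hx, smul_eq_mul]
      rw [show ⇑(ghat l) = ⇑(MemLp.toLp (costs c l) (hg_mem l)) from rfl, hgx]
    rw [integral_congr_ae hcongr, hD l (ghat l)]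
  -- conclusion
  refine ⟨βs, hβs_decomp, ?_⟩
  intro β' hβ'
  have hphis : phiVal c βs = G Λs := by
    rw [phiVal, hval 0, hval 1, hval 2, hG]
  have hβ'val : ∀ l : Fin 3, ∫ x, costs c l x ∂(β' l)
      = mkΛ β' (decomps_le hβ') l (ghat l) := by
    intro l
    rw [hmkΛ_apply]
    refine integral_congr_ae ?_
    exact ((Measure.absolutelyContinuous_of_le (decomps_le hβ' l)).ae_eq
      (MemLp.coeFn_toLp (hg_mem l))).symm
  have hphib : phiVal c β' = G (mkΛ β' (decomps_le hβ')) := by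
    rw [phiVal, hβ'val 0, hβ'val 1, hβ'val 2, hG]
  rw [hphis, hphib]
  exact hmin (hmkK β' hβ')

lemma bddBelow_phiVal_image {c : ℂ → ℝ} (hc_nonneg : ∀ x, 0 ≤ c x) (α : Measure ℂ) :
    BddBelow (phiVal c '' decomps α) := by
  refine ⟨0, ?_⟩
  rintro y ⟨β', hβ', rfl⟩
  exact phiVal_nonneg hc_nonneg β'

set_option maxHeartbeats 1000000 in
lemma optimal_balanced (c : ℂ → ℝ) (hc_meas : Measurable c) (hc_nonneg : ∀ x, 0 ≤ c x)
    (hc_bdd : BddAbove (c '' Tri)) (α : Measure ℂ) (hα : IsProbabilityMeasure α)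
    (hαT : α Triᶜ = 0) {β : Fin 3 → Measure ℂ} (hβ : β ∈ decomps α)
    (hopt : Phi c α = phiVal c β) :
    ∀ l : Fin 3, (∫ x, costs c l x ∂(β l)) = phiVal c β := by
  haveI := hα
  obtain ⟨B, hB0, hB⟩ := exists_costs_bound hc_bdd
  set M := phiVal c β with hM
  set I : Fin 3 → ℝ := fun l => ∫ x, costs c l x ∂(β l) with hI
  have hfin : ∀ l, IsFiniteMeasure (β l) := fun l =>
    isFiniteMeasure_of_le α (decomps_le hβ l)
  have hIle : ∀ l, I l ≤ M := fun l => integral_le_phiVal β l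
  have hInn : ∀ l, 0 ≤ I l := fun l => integral_nonneg (costs_nonneg hc_nonneg l)
  have hint_le : ∀ (μ : Measure ℂ), μ ≤ α → μ Triᶜ = 0 → ∀ l : Fin 3,
      ∫ x, costs c l x ∂μ ≤ B := by
    intro μ hle hT l
    haveI := isFiniteMeasure_of_le α hle
    have h1 : μ Set.univ ≤ 1 := by
      have h2 := Measure.le_iff'.mp hle Set.univ
      rwa [measure_univ (μ := α)] at h2
    calc ∫ x, costs c l x ∂μ ≤ ∫ _, B ∂μ := by
          refine integral_mono_ae (integrable_costs hc_meas hc_nonneg hc_bdd hT l)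
            (integrable_const B) ?_
          filter_upwards [ae_mem_Tri hT] with x hx using hB l x hx
      _ = (μ Set.univ).toReal * B := by rw [integral_const, smul_eq_mul, measureReal_def]
      _ ≤ 1 * B := by
          refine mul_le_mul_of_nonneg_right ?_ hB0
          calc (μ Set.univ).toReal ≤ (1 : ℝ≥0∞).toReal :=
                ENNReal.toReal_mono ENNReal.one_ne_top h1
            _ = 1 := ENNReal.toReal_one
      _ = B := one_mul B
  intro m
  rcases eq_or_lt_of_le (hIle m) with h | h
  · exact h
  exfalso
  have hMpos : 0 < M := lt_of_le_of_lt (hInn m) h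
  set δ := M - I m with hδ
  have hδpos : 0 < δ := sub_pos.mpr h
  set t : ℝ := min (1/2) (δ / (2 * (B + 1))) with ht
  have ht0 : 0 < t := lt_min (by norm_num) (div_pos hδpos (by linarith))
  have ht1 : t < 1 := lt_of_le_of_lt (min_le_left _ _) (by norm_num)
  set tE : ℝ≥0∞ := ENNReal.ofReal t with htE
  have htE1 : tE ≤ 1 := by
    rw [htE, ← ENNReal.ofReal_one]
    exact ENNReal.ofReal_le_ofReal (le_of_lt ht1)
  have htEne : tE ≠ ⊤ := ENNReal.ofReal_ne_top
  have h1tEne : (1 : ℝ≥0∞) - tE ≠ ⊤ := by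
    intro hcon
    exact ENNReal.one_ne_top (eq_top_mono tsub_le_self hcon)
  have h1tE_toReal : ((1 : ℝ≥0∞) - tE).toReal = 1 - t := by
    rw [ENNReal.toReal_sub_of_le htE1 ENNReal.one_ne_top, ENNReal.toReal_one, htE,
      ENNReal.toReal_ofReal ht0.le]
  have htE_toReal : tE.toReal = t := by rw [htE, ENNReal.toReal_ofReal ht0.le]
  set β' : Fin 3 → Measure ℂ := fun l =>
    (1 - tE) • β l + (if l = m then tE • α else 0) with hβ'
  have hβ'mem : β' ∈ decomps α := by
    refine ⟨?_, ?_, ?_⟩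
    · intro l
      by_cases hl : l = m
      · rw [hβ', hl]
        simp only [if_pos rfl, Measure.coe_add, Pi.add_apply, Measure.smul_apply,
          smul_eq_mul]
        calc (1 - tE) * β m Set.univ + tE * α Set.univ
            ≤ (1 - tE) * 1 + tE * 1 := by
              refine add_le_add (mul_le_mul_right (hβ.1 m) _) (mul_le_mul_right ?_ _)
              rw [measure_univ]
          _ = (1 - tE) + tE := by rw [mul_one, mul_one]
          _ = 1 := tsub_add_cancel_of_le htE1
      · rw [hβ']
        simp only [if_neg hl, add_zero, Measure.smul_apply, smul_eq_mul]
        calc (1 - tE) * β l Set.univ ≤ (1 - tE) * 1 := mul_le_mul_right (hβ.1 l) _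
          _ = 1 - tE := mul_one _
          _ ≤ 1 := tsub_le_self
    · intro l
      by_cases hl : l = m <;>
        simp [hβ', hl, Measure.smul_apply, hβ.2.1 l, hβ.2.1 m, hαT]
    · have hsum : (1 - tE) • β 0 + (1 - tE) • β 1 + (1 - tE) • β 2 + tE • α = α := by
        rw [← smul_add, ← smul_add, hβ.2.2, ← add_smul, tsub_add_cancel_of_le htE1,
          one_smul]
      fin_cases m <;> simp only [hβ']
      · rw [if_pos (by decide), if_neg (by decide), if_neg (by decide), add_zero, add_zero]
        conv_rhs => rw [← hsum]
        abel
      · rw [if_neg (by decide), if_pos (by decide), if_neg (by decide), add_zero, add_zero]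
        conv_rhs => rw [← hsum]
        abel
      · rw [if_neg (by decide), if_neg (by decide), if_pos (by decide), add_zero, add_zero]
        conv_rhs => rw [← hsum]
        abel
  have hβ'val : ∀ l : Fin 3, (∫ x, costs c l x ∂(β' l))
      = (1 - t) * I l + (if l = m then t * ∫ x, costs c l x ∂α else 0) := by
    intro l
    have hint1 : Integrable (costs c l) ((1 - tE) • β l) :=
      (integrable_costs hc_meas hc_nonneg hc_bdd (hβ.2.1 l) l).smul_measure h1tEne
    by_cases hl : l = m
    · have hint2 : Integrable (costs c l) (tE • α) :=
        (integrable_costs hc_meas hc_nonneg hc_bdd hαT l).smul_measure htEne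
      have e : β' l = (1 - tE) • β l + tE • α := by rw [hβ']; simp only [if_pos hl]
      rw [e, if_pos hl, integral_add_measure hint1 hint2, integral_smul_measure,
        integral_smul_measure, h1tE_toReal, htE_toReal, smul_eq_mul, smul_eq_mul]
    · have e : β' l = (1 - tE) • β l := by rw [hβ']; simp only [if_neg hl, add_zero]
      rw [e, if_neg hl, integral_smul_measure, h1tE_toReal, smul_eq_mul, add_zero]
  have hJ : ∀ l : Fin 3, (∫ x, costs c l x ∂(β' l)) < M := by
    intro l
    rw [hβ'val l]
    by_cases hl : l = m
    · rw [if_pos hl]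
      have hCle : ∫ x, costs c l x ∂α ≤ B := hint_le α le_rfl hαT l
      have hCnn : 0 ≤ ∫ x, costs c l x ∂α := integral_nonneg (costs_nonneg hc_nonneg l)
      have ht2 : t ≤ δ / (2 * (B + 1)) := min_le_right _ _
      have h2 : t * B < δ := by
        calc t * B ≤ δ / (2 * (B + 1)) * B := mul_le_mul_of_nonneg_right ht2 hB0
          _ < δ := by
              rw [div_mul_eq_mul_div, div_lt_iff₀ (by linarith)]
              nlinarith
      have h3 : t * ∫ x, costs c l x ∂α ≤ t * B :=
        mul_le_mul_of_nonneg_left hCle ht0.le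
      have e1 : (1 - t) * I l ≤ I l := by nlinarith [hInn l]
      have hIlm : I l = I m := by rw [hl]
      have : δ = M - I m := hδ
      nlinarith
    · rw [if_neg hl, add_zero]
      have e1 : (1 - t) * I l ≤ (1 - t) * M :=
        mul_le_mul_of_nonneg_left (hIle l) (by linarith)
      nlinarith
  have hlt : phiVal c β' < M := max_lt (max_lt (hJ 0) (hJ 1)) (hJ 2)
  have hPhile : Phi c α ≤ phiVal c β' :=
    csInf_le (bddBelow_phiVal_image hc_nonneg α) (Set.mem_image_of_mem _ hβ'mem)
  rw [hopt] at hPhile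
  linarith


/-- **Balancing property of optimal fractional decompositions** (Lemma 2.2 (i)): every
`α ∈ ℳ₁(𝕋)` admits a decomposition `α = α₁ + α₂ + α₃` with `Φ(α) = φ(α₁,α₂,α₃)`, and any
such optimal decomposition satisfies `α₁(c₁) = α₂(c₂) = α₃(c₃)`. -/
theorem optimal_decomposition_balanced
    (c : ℂ → ℝ) (hc_meas : Measurable c) (hc_nonneg : ∀ x, 0 ≤ c x)
    (hc_bdd : BddAbove (c '' Tri)) :
    ∀ α : Measure ℂ, IsProbabilityMeasure α → α Triᶜ = 0 →
      (∃ β ∈ decomps α, Phi c α = phiVal c β) ∧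
      ∀ β ∈ decomps α, Phi c α = phiVal c β →
        (∫ x, costs c 0 x ∂(β 0)) = (∫ x, costs c 1 x ∂(β 1)) ∧
        (∫ x, costs c 1 x ∂(β 1)) = (∫ x, costs c 2 x ∂(β 2)) := by
  intro α hα hαT
  constructor
  · obtain ⟨β, hβ, hmin⟩ := exists_optimal_decomp c hc_meas hc_nonneg hc_bdd α hα hαT
    refine ⟨β, hβ, le_antisymm
      (csInf_le (bddBelow_phiVal_image hc_nonneg α) (Set.mem_image_of_mem _ hβ)) ?_⟩
    refine le_csInf ⟨phiVal c β, Set.mem_image_of_mem _ hβ⟩ ?_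
    rintro y ⟨β', hβ', rfl⟩
    exact hmin β' hβ'
  · intro β hβ hopt
    have hb := optimal_balanced c hc_meas hc_nonneg hc_bdd α hα hαT hβ hopt
    exact ⟨(hb 0).trans (hb 1).symm, (hb 1).trans (hb 2).symm⟩


end LoadOpt
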